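/- Mixing Lemma: Let |ψ⟩ = Σ_{i=1}^{d} α_i |w_i⟩⊗|v_i⟩ be a Schmidt decomposition of an n-qudit state across the cut between qudit 1 and the rest (with {|w_i⟩} orthonormal in ℂ^d, {|v_i⟩} orthonormal in (ℂ^d)^{⊗(n−1)}, α_i ≥ 0, Σα_i² = 1). Define ρ := Σ_{i=1}^{d} α_i² |w_i⟩⟨w_i| ⊗ |v_i⟩⟨v_i|. Then for any orthogonal projector Π on (ℂ^d)^{⊗n}, Tr(Π ρ) ≥ (1/d) · Tr(Π |ψ⟩⟨ψ|). -/

import Mathlib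

open Matrix BigOperators

private lemma trace_mul_vecMulVec {n : Type*} [Fintype n] [DecidableEq n]
    (P : Matrix n n ℂ) (a b : n → ℂ) :
    trace (P * vecMulVec a b) = b ⬝ᵥ P.mulVec a := by
  simp only [trace, diag, mul_apply, vecMulVec_apply, dotProduct, mulVec,
    Finset.mul_sum]
  congr 1; ext p; congr 1; ext q; ring

/-- Mixing Lemma: mixing the Schmidt components of `ψ` across the first cut loses at most
a factor `1/d` against any orthogonal projector `P`. -/
theorem stmt1 (d : ℕ) (hd : 0 < d) {m : Type*} [Fintype m]
    (α : Fin d → ℝ) (hα0 : ∀ i, 0 ≤ α i) (hα1 : ∑ i, α i ^ 2 = 1)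
    (w : Fin d → Fin d → ℂ) (v : Fin d → m → ℂ)
    (hw : ∀ i j, star (w i) ⬝ᵥ w j = if i = j then 1 else 0)
    (hv : ∀ i j, star (v i) ⬝ᵥ v j = if i = j then 1 else 0)
    (u : Fin d → Fin d × m → ℂ) (hu : ∀ i, u i = fun p => w i p.1 * v i p.2)
    (ψ : Fin d × m → ℂ) (hψ : ψ = fun p => ∑ i, (α i : ℂ) * u i p)
    (ρ : Matrix (Fin d × m) (Fin d × m) ℂ)
    (hρ : ρ = ∑ i, (α i ^ 2 : ℝ) • vecMulVec (u i) (star (u i)))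
    (P : Matrix (Fin d × m) (Fin d × m) ℂ)
    (hproj : P * P = P) (hherm : P.IsHermitian) :
    (1 / d : ℝ) * (trace (P * vecMulVec ψ (star ψ))).re ≤ (trace (P * ρ)).re := by
  classical
  -- key reduction: ⟨c, P c⟩ = ⟨P c, P c⟩
  have key : ∀ c : Fin d × m → ℂ,
      (trace (P * vecMulVec c (star c))).re = ∑ p, Complex.normSq (P.mulVec c p) := by
    intro c
    have h1 : trace (P * vecMulVec c (star c))
        = star (P.mulVec c) ⬝ᵥ P.mulVec c := by
      rw [trace_mul_vecMulVec]
      conv_lhs => rw [← hproj]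
      rw [← Matrix.mulVec_mulVec, dotProduct_mulVec]
      congr 1
      rw [Matrix.star_mulVec, hherm.eq]
    rw [h1]
    simp only [dotProduct, Pi.star_apply, Complex.re_sum]
    congr 1; ext p
    simp [Complex.star_def, Complex.mul_conj, Complex.normSq_apply]
  -- compute trace (P * ρ)
  have hρtr : (trace (P * ρ)).re
      = ∑ i, (α i) ^ 2 * ∑ p, Complex.normSq (P.mulVec (u i) p) := by
    rw [hρ, Matrix.mul_sum, trace_sum, Complex.re_sum]
    congr 1; ext i
    rw [Matrix.mul_smul, trace_smul]
    rw [show ((α i ^ 2 : ℝ) • trace (P * vecMulVec (u i) (star (u i))))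
        = ((α i ^ 2 : ℝ) : ℂ) * trace (P * vecMulVec (u i) (star (u i))) from rfl]
    rw [Complex.re_ofReal_mul, key]
  -- compute P.mulVec ψ pointwise
  have hPψ : ∀ p, P.mulVec ψ p = ∑ i, (α i : ℂ) * P.mulVec (u i) p := by
    intro p
    simp only [mulVec, dotProduct, hψ, Finset.mul_sum]
    rw [Finset.sum_comm]
    congr 1; ext i; congr 1; ext q; ring
  rw [key ψ, hρtr]
  -- pointwise Cauchy–Schwarz
  have hpt : ∀ p, Complex.normSq (P.mulVec ψ p)
      ≤ (d : ℝ) * ∑ i, (α i) ^ 2 * Complex.normSq (P.mulVec (u i) p) := by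
    intro p
    rw [hPψ p]
    have h1 : ‖∑ i, (α i : ℂ) * P.mulVec (u i) p‖
        ≤ ∑ i, ‖(α i : ℂ) * P.mulVec (u i) p‖ := by
      simpa using norm_sum_le Finset.univ (fun i => (α i : ℂ) * P.mulVec (u i) p)
    have h2 : Complex.normSq (∑ i, (α i : ℂ) * P.mulVec (u i) p)
        ≤ (∑ i, ‖(α i : ℂ) * P.mulVec (u i) p‖) ^ 2 := by
      rw [← Complex.sq_norm]
      exact pow_le_pow_left₀ (norm_nonneg _) h1 2
    refine h2.trans ?_
    have h3 := sq_sum_le_card_mul_sum_sq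
      (s := (Finset.univ : Finset (Fin d)))
      (f := fun i => ‖(α i : ℂ) * P.mulVec (u i) p‖)
    simpa [Complex.sq_norm, norm_mul, mul_pow, Complex.norm_real, Real.norm_eq_abs, sq_abs,
      mul_comm, mul_left_comm, mul_assoc] using h3
  have hsum : ∑ p, Complex.normSq (P.mulVec ψ p)
      ≤ (d : ℝ) * ∑ i, (α i) ^ 2 * ∑ p, Complex.normSq (P.mulVec (u i) p) := by
    calc ∑ p, Complex.normSq (P.mulVec ψ p)
        ≤ ∑ p, (d : ℝ) * ∑ i, (α i) ^ 2 * Complex.normSq (P.mulVec (u i) p) :=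
          Finset.sum_le_sum fun p _ => hpt p
      _ = (d : ℝ) * ∑ i, (α i) ^ 2 * ∑ p, Complex.normSq (P.mulVec (u i) p) := by
          rw [← Finset.mul_sum, Finset.sum_comm]
          congr 1
          exact Finset.sum_congr rfl fun i _ => (Finset.mul_sum _ _ _).symm
  have hd' : (0 : ℝ) < d := Nat.cast_pos.mpr hd
  rw [one_div, inv_mul_le_iff₀ hd']
  exact hsum
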